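/- If λ₀ε + λ₁r = −ℏ, μ₀ε' + μ₁r' = ℏ', λ₀ε' + λ₁r' = 0 and μ₀ε + μ₁r = 0, then the left C_ℏ^∞-action (f·ξ)(x,k) = Σ_n f_n(λ₀x+λ₁k)ξ(x−nε,k−nr) and the right C_{ℏ'}^∞-action (ξ·g)(x,k) = Σ_n g_n(μ₀x+μ₁k−nℏ')ξ(x−nε',k−nr') commute: f·(ξ·g) = (f·ξ)·g, making S(ℝ×ℤ) a (C_ℏ^∞, C_{ℏ'}^∞)-bimodule. -/

import Mathlib

/-- The left action `(f·ξ)(x,k) = ∑_n f_n(λ₀x + λ₁k) ξ(x − nε, k − nr)`. -/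
noncomputable def leftAct (l0 l1 ε : ℝ) (r : ℤ) (f : ℤ → ℝ → ℂ) (ξ : ℝ → ℤ → ℂ) :
    ℝ → ℤ → ℂ :=
  fun x k => ∑' n : ℤ, f n (l0 * x + l1 * k) * ξ (x - n * ε) (k - n * r)

/-- The right action `(ξ·g)(x,k) = ∑_n g_n(μ₀x + μ₁k − nℏ') ξ(x − nε', k − nr')`. -/
noncomputable def rightAct (m0 m1 ε' ℏ' : ℝ) (r' : ℤ) (g : ℤ → ℝ → ℂ) (ξ : ℝ → ℤ → ℂ) :
    ℝ → ℤ → ℂ :=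
  fun x k => ∑' n : ℤ, g n (m0 * x + m1 * k - n * ℏ') * ξ (x - n * ε') (k - n * r')

/-- Under the compatibility conditions of the parameters, the left `C_ℏ^∞`-action and the
right `C_{ℏ'}^∞`-action commute, making `S(ℝ×ℤ)` a bimodule. -/
theorem bimodule_actions_commute (ℏ ℏ' l0 l1 m0 m1 ε ε' : ℝ) (r r' : ℤ)
    (h1 : l0 * ε + l1 * r = -ℏ) (h2 : m0 * ε' + m1 * r' = ℏ')
    (h3 : l0 * ε' + l1 * r' = 0) (h4 : m0 * ε + m1 * r = 0)
    (f g : ℤ → ℝ → ℂ)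
    (hf : (Function.support f).Finite) (hg : (Function.support g).Finite)
    (ξ : ℝ → ℤ → ℂ) :
    leftAct l0 l1 ε r f (rightAct m0 m1 ε' ℏ' r' g ξ) =
      rightAct m0 m1 ε' ℏ' r' g (leftAct l0 l1 ε r f ξ) := by
  funext x k
  have hfz : ∀ n ∉ hf.toFinset, ∀ t : ℝ, f n t = 0 := by
    intro n hn t
    have : f n = 0 := Function.notMem_support.mp (by simpa using hn)
    simp [this]
  have hgz : ∀ m ∉ hg.toFinset, ∀ t : ℝ, g m t = 0 := by
    intro m hm t
    have : g m = 0 := Function.notMem_support.mp (by simpa using hm)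
    simp [this]
  simp only [leftAct, rightAct]
  rw [tsum_eq_sum (s := hf.toFinset) (fun n hn => by simp [hfz n hn]),
      tsum_eq_sum (s := hg.toFinset) (fun m hm => by simp [hgz m hm])]
  have hL : ∀ n ∈ hf.toFinset,
      f n (l0 * x + l1 * k) *
        (∑' m : ℤ, g m (m0 * (x - n * ε) + m1 * ↑(k - n * r) - m * ℏ') *
          ξ (x - n * ε - m * ε') (k - n * r - m * r')) =
      ∑ m ∈ hg.toFinset, f n (l0 * x + l1 * k) *
        (g m (m0 * x + m1 * k - m * ℏ') *
          ξ (x - n * ε - m * ε') (k - n * r - m * r')) := by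
    intro n _
    rw [tsum_eq_sum (s := hg.toFinset) (fun m hm => by simp [hgz m hm]), Finset.mul_sum]
    refine Finset.sum_congr rfl fun m _ => ?_
    rw [show m0 * (x - n * ε) + m1 * ↑(k - n * r) - m * ℏ' = m0 * x + m1 * k - m * ℏ' by
      push_cast; linear_combination (-(n:ℝ)) * h4]
  have hR : ∀ m ∈ hg.toFinset,
      g m (m0 * x + m1 * k - m * ℏ') *
        (∑' n : ℤ, f n (l0 * (x - m * ε') + l1 * ↑(k - m * r')) *
          ξ (x - m * ε' - n * ε) (k - m * r' - n * r)) =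
      ∑ n ∈ hf.toFinset, g m (m0 * x + m1 * k - m * ℏ') *
        (f n (l0 * x + l1 * k) *
          ξ (x - m * ε' - n * ε) (k - m * r' - n * r)) := by
    intro m _
    rw [tsum_eq_sum (s := hf.toFinset) (fun n hn => by simp [hfz n hn]), Finset.mul_sum]
    refine Finset.sum_congr rfl fun n _ => ?_
    rw [show l0 * (x - m * ε') + l1 * ↑(k - m * r') = l0 * x + l1 * k by
      push_cast; linear_combination (-(m:ℝ)) * h3]
  rw [Finset.sum_congr rfl hL, Finset.sum_congr rfl hR, Finset.sum_comm]
  refine Finset.sum_congr rfl fun m _ => Finset.sum_congr rfl fun n _ => ?_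
  have e1 : x - n * ε - m * ε' = x - m * ε' - n * ε := by ring
  have e2 : k - n * r - m * r' = k - m * r' - n * r := by ring
  rw [e1, e2]; ring
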